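/- arXiv:2407.17804 — 2 statements merged into one kernel-verified Lean document; each statement's English description precedes it below -/
import Mathlib

section
/- For the Gaussian kernel K̃(r) = σ² exp(−φ r²) in ℝ² with σ², φ > 0, the 2×2 cross-covariance matrix of the joint (gradient, curvature) wombling measures over a unit-direction segment of length t* is diagonal: V_Γ(t*) = 2σ²√π φ^{1/2} t* (2Φ(√(2φ) t*) − 1) · diag(1, 6φ), where Φ is the standard normal CDF. In particular the off-diagonal covariances k₁₂ = k₂₁ = 0. -/
open MeasureTheory
open scoped RealInnerProductSpace

/-- The standard normal cumulative distribution function. -/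
noncomputable def stdNormalCDF (x : ℝ) : ℝ :=
  ∫ t in Set.Iic x, Real.exp (-(t ^ 2) / 2) / Real.sqrt (2 * Real.pi)

section Aux

open Set Real

variable {E F : Type*} [NormedAddCommGroup E] [NormedSpace ℝ E]
  [NormedAddCommGroup F] [NormedSpace ℝ F]

lemma iteratedFDeriv_comp_add_left'' (f : E → F) (hf : ContDiff ℝ ⊤ f) (a : E) :
    ∀ (n : ℕ) (x : E), iteratedFDeriv ℝ n (fun y => f (a + y)) x = iteratedFDeriv ℝ n f (a + x) := by
  intro n
  induction n with
  | zero => intro x; ext m; simp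
  | succ n ih =>
    intro x
    have hfun : (iteratedFDeriv ℝ n fun y => f (a + y)) = fun y => iteratedFDeriv ℝ n f (a + y) :=
      funext ih
    ext m
    rw [iteratedFDeriv_succ_apply_left, iteratedFDeriv_succ_apply_left, hfun]
    have hdiff : DifferentiableAt ℝ (iteratedFDeriv ℝ n f) (a + x) :=
      (hf.differentiable_iteratedFDeriv
        (by exact_mod_cast lt_top_iff_ne_top.2 (by simp))).differentiableAt
    have h1 : HasFDerivAt (fun y : E => a + y) (ContinuousLinearMap.id ℝ E) x :=
      (hasFDerivAt_id x).const_add a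
    have h2 : HasFDerivAt (fun y => iteratedFDeriv ℝ n f (a + y))
        ((fderiv ℝ (iteratedFDeriv ℝ n f) (a + x)).comp (ContinuousLinearMap.id ℝ E)) x :=
      (hdiff.hasFDerivAt).comp x h1
    rw [h2.fderiv]
    simp

lemma iteratedFDeriv_dir (f : E → F) (hf : ContDiff ℝ ⊤ f) (p v : E) (n : ℕ) :
    iteratedFDeriv ℝ n f p (fun _ => v) = iteratedDeriv n (fun t : ℝ => f (p + t • v)) 0 := by
  set L : ℝ →L[ℝ] E := ContinuousLinearMap.toSpanSingleton ℝ v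
  have hshift : ContDiff ℝ ⊤ (fun y => f (p + y)) :=
    hf.comp (contDiff_const.add contDiff_id)
  have hcomp : (fun t : ℝ => f (p + t • v)) = (fun y => f (p + y)) ∘ L := by
    funext t; simp [L, ContinuousLinearMap.toSpanSingleton_apply]
  rw [iteratedDeriv, hcomp,
    ContinuousLinearMap.iteratedFDeriv_comp_right L hshift 0 le_top]
  simp only [ContinuousMultilinearMap.compContinuousLinearMap_apply]
  rw [map_zero, iteratedFDeriv_comp_add_left'' f hf p n 0, add_zero]
  congr 1
  funext i
  simp [L, ContinuousLinearMap.toSpanSingleton_apply]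

lemma hasDerivAt_pg (φ : ℝ) {P : ℝ → ℝ} {P' : ℝ} (t : ℝ) (hP : HasDerivAt P P' t) :
    HasDerivAt (fun s => P s * Real.exp (-(φ * s ^ 2)))
      ((P' - 2 * φ * t * P t) * Real.exp (-(φ * t ^ 2))) t := by
  have he : HasDerivAt (fun s : ℝ => Real.exp (-(φ * s ^ 2)))
      (Real.exp (-(φ * t ^ 2)) * -(φ * ((2 : ℕ) * t ^ (2 - 1)))) t :=
    (((hasDerivAt_pow 2 t).const_mul φ).neg).exp
  exact (hP.mul he).congr_deriv (by push_cast; ring)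

noncomputable def g0 (φ t : ℝ) : ℝ := Real.exp (-(φ * t ^ 2))
noncomputable def g1 (φ t : ℝ) : ℝ := (-(2 * φ * t)) * Real.exp (-(φ * t ^ 2))
noncomputable def g2 (φ t : ℝ) : ℝ := (-(2 * φ) + 4 * φ ^ 2 * t ^ 2) * Real.exp (-(φ * t ^ 2))
noncomputable def g3 (φ t : ℝ) : ℝ :=
  (12 * φ ^ 2 * t - 8 * φ ^ 3 * t ^ 3) * Real.exp (-(φ * t ^ 2))
noncomputable def g4 (φ t : ℝ) : ℝ :=
  (12 * φ ^ 2 - 48 * φ ^ 3 * t ^ 2 + 16 * φ ^ 4 * t ^ 4) * Real.exp (-(φ * t ^ 2))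

lemma deriv_g0 (φ : ℝ) : deriv (g0 φ) = g1 φ := by
  funext t
  have h : HasDerivAt (fun s => (fun _ : ℝ => (1:ℝ)) s * Real.exp (-(φ * s ^ 2)))
      ((0 - 2 * φ * t * 1) * Real.exp (-(φ * t ^ 2))) t := hasDerivAt_pg φ t (hasDerivAt_const t 1)
  simp only [one_mul] at h
  have := h.deriv
  unfold g0 g1
  rw [this]; ring

lemma deriv_g1 (φ : ℝ) : deriv (g1 φ) = g2 φ := by
  funext t
  have hP : HasDerivAt (fun s : ℝ => -(2 * φ * s)) (-(2 * φ)) t := by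
    exact ((hasDerivAt_id t).const_mul (2 * φ)).neg.congr_deriv (by simp)
  have h := (hasDerivAt_pg φ t hP).deriv
  unfold g1 g2
  rw [h]; ring

lemma deriv_g2 (φ : ℝ) : deriv (g2 φ) = g3 φ := by
  funext t
  have hP : HasDerivAt (fun s : ℝ => -(2 * φ) + 4 * φ ^ 2 * s ^ 2) (4 * φ ^ 2 * (2 * t)) t := by
    have := ((hasDerivAt_pow 2 t).const_mul (4 * φ ^ 2)).const_add (-(2 * φ))
    exact this.congr_deriv (by push_cast; ring)
  have h := (hasDerivAt_pg φ t hP).deriv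
  unfold g2 g3
  rw [h]; ring

lemma deriv_g3 (φ : ℝ) : deriv (g3 φ) = g4 φ := by
  funext t
  have hP : HasDerivAt (fun s : ℝ => 12 * φ ^ 2 * s - 8 * φ ^ 3 * s ^ 3)
      (12 * φ ^ 2 - 8 * φ ^ 3 * (3 * t ^ 2)) t := by
    have h1 : HasDerivAt (fun s : ℝ => 12 * φ ^ 2 * s) (12 * φ ^ 2) t := by
      simpa using (hasDerivAt_id t).const_mul (12 * φ ^ 2)
    have h2 := (hasDerivAt_pow 3 t).const_mul (8 * φ ^ 3)
    have := h1.sub h2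
    exact this.congr_deriv (by norm_num)
  have h := (hasDerivAt_pg φ t hP).deriv
  unfold g3 g4
  rw [h]; ring

lemma iteratedDeriv_g0_two (φ : ℝ) : iteratedDeriv 2 (g0 φ) 0 = -(2 * φ) := by
  rw [show (2:ℕ) = 1 + 1 from rfl, iteratedDeriv_succ', deriv_g0, iteratedDeriv_succ', deriv_g1,
    iteratedDeriv_zero]
  simp [g2]

lemma iteratedDeriv_g0_three (φ : ℝ) : iteratedDeriv 3 (g0 φ) 0 = 0 := by
  rw [show (3:ℕ) = 2 + 1 from rfl, iteratedDeriv_succ', deriv_g0, show (2:ℕ) = 1 + 1 from rfl,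
    iteratedDeriv_succ', deriv_g1, iteratedDeriv_succ', deriv_g2, iteratedDeriv_zero]
  simp [g3]

lemma iteratedDeriv_g0_four (φ : ℝ) : iteratedDeriv 4 (g0 φ) 0 = 12 * φ ^ 2 := by
  rw [show (4:ℕ) = 3 + 1 from rfl, iteratedDeriv_succ', deriv_g0, show (3:ℕ) = 2 + 1 from rfl,
    iteratedDeriv_succ', deriv_g1, show (2:ℕ) = 1 + 1 from rfl, iteratedDeriv_succ', deriv_g2,
    iteratedDeriv_succ', deriv_g3, iteratedDeriv_zero]
  simp [g4]

lemma contDiff_g0 (φ : ℝ) : ContDiff ℝ ⊤ (g0 φ) :=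
  ((contDiff_const.mul (contDiff_id.pow 2)).neg).exp

noncomputable def snf (t : ℝ) : ℝ := Real.exp (-(t ^ 2) / 2) / Real.sqrt (2 * Real.pi)

lemma stdNormalCDF_eq (x : ℝ) : stdNormalCDF x = ∫ t in Set.Iic x, snf t := rfl

lemma snf_eq' : snf = fun t => Real.exp (-(1/2 : ℝ) * t ^ 2) * (Real.sqrt (2 * Real.pi))⁻¹ := by
  funext t
  unfold snf
  rw [div_eq_mul_inv]
  congr 2
  ring

lemma snf_integrable : Integrable snf := by
  rw [snf_eq']
  exact (integrable_exp_neg_mul_sq (by norm_num : (0:ℝ) < 1/2)).mul_const _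

lemma snf_total : ∫ t : ℝ, snf t = 1 := by
  rw [snf_eq', integral_mul_const, integral_gaussian,
    show Real.pi / (1/2) = 2 * Real.pi by ring,
    mul_inv_cancel₀ (Real.sqrt_ne_zero'.2 (by positivity))]

lemma snf_even (t : ℝ) : snf (-t) = snf t := by unfold snf; ring_nf

lemma stdNormalCDF_symm (c : ℝ) : stdNormalCDF (-c) = 1 - stdNormalCDF c := by
  have h1 : stdNormalCDF c = ∫ x in Ioi (-c), snf x := by
    rw [stdNormalCDF_eq, ← integral_comp_neg_Iic]
    simp_rw [snf_even]
  have h2 := intervalIntegral.integral_Iic_add_Ioi (b := -c) (f := snf) (μ := volume)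
    snf_integrable.integrableOn snf_integrable.integrableOn
  rw [snf_total] at h2
  rw [stdNormalCDF_eq, ← h2, h1]
  ring

lemma two_cdf_sub_one (c : ℝ) : 2 * stdNormalCDF c - 1 = ∫ t in (-c)..c, snf t := by
  rw [← intervalIntegral.integral_Iic_sub_Iic snf_integrable.integrableOn
    snf_integrable.integrableOn]
  have h := stdNormalCDF_symm c
  simp only [stdNormalCDF_eq] at h ⊢
  linarith

lemma cdf_gauss (φ b : ℝ) (hφ : 0 < φ) :
    2 * stdNormalCDF (Real.sqrt (2 * φ) * b) - 1
      = Real.sqrt (φ / Real.pi) * ∫ x in (-b)..b, Real.exp (-(φ * x ^ 2)) := by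
  set c := Real.sqrt (2 * φ) with hcdef
  have hc : 0 < c := Real.sqrt_pos.2 (by linarith)
  rw [two_cdf_sub_one]
  have hsub := intervalIntegral.smul_integral_comp_mul_left (f := snf) (a := -b) (b := b) c
  rw [show c * -b = -(c * b) by ring] at hsub
  rw [← hsub]
  have hcsq : c ^ 2 = 2 * φ := Real.sq_sqrt (by linarith)
  have hinner : ∀ x : ℝ, snf (c * x)
      = Real.exp (-(φ * x ^ 2)) * (Real.sqrt (2 * Real.pi))⁻¹ := by
    intro x
    unfold snf
    rw [div_eq_mul_inv]
    congr 2
    rw [mul_pow, hcsq]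
    ring
  simp_rw [hinner]
  rw [intervalIntegral.integral_mul_const, smul_eq_mul,
    show c * ((∫ x in (-b)..b, Real.exp (-(φ * x ^ 2))) * (Real.sqrt (2 * Real.pi))⁻¹)
      = (c * (Real.sqrt (2 * Real.pi))⁻¹) * ∫ x in (-b)..b, Real.exp (-(φ * x ^ 2)) by ring]
  congr 1
  rw [hcdef, ← Real.sqrt_inv, ← Real.sqrt_mul (by positivity)]
  congr 1
  rw [mul_comm 2 Real.pi]
  field_simp

end Aux

/-- for the Gaussian kernel `K(Δ) = σ² exp(−φ‖Δ‖²)` in ℝ², the 2×2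
cross-covariance matrix of the (gradient, curvature) wombling measures over a
unit-direction segment of length `t*` is
`V_Γ(t*) = 2σ²√π φ^{1/2} t* (2Φ(√(2φ)t*) − 1) · diag(1, 6φ)`, with zero off-diagonal
entries; entries are `kᵢⱼ(t*,t*) = (−1)ⁱ t* ∫_{−t*}^{t*} aᵢᵀ ∂_s^{i+j}K(xu) aⱼ dx`
(directional contractions of kernel derivatives against the unit normal `u⊥`). -/
theorem gaussian_wombling_covariance_matrix
    (s2 φ tstar : ℝ) (hs2 : 0 < s2) (hφ : 0 < φ) (ht : 0 < tstar)
    (u uperp : EuclideanSpace ℝ (Fin 2)) (hu : ‖u‖ = 1) (huperp : ‖uperp‖ = 1)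
    (horth : ⟪u, uperp⟫ = 0)
    (K : EuclideanSpace ℝ (Fin 2) → ℝ)
    (hK : ∀ Δ, K Δ = s2 * Real.exp (-(φ * ‖Δ‖ ^ 2))) :
    ((-1:ℝ) ^ 1 * tstar * ∫ x in (-tstar)..tstar,
        iteratedFDeriv ℝ (1 + 1) K (x • u) (fun _ => uperp))
      = 2 * s2 * Real.sqrt Real.pi * Real.sqrt φ * tstar *
          (2 * stdNormalCDF (Real.sqrt (2 * φ) * tstar) - 1) ∧
    ((-1:ℝ) ^ 2 * tstar * ∫ x in (-tstar)..tstar,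
        iteratedFDeriv ℝ (2 + 2) K (x • u) (fun _ => uperp))
      = 2 * s2 * Real.sqrt Real.pi * Real.sqrt φ * tstar *
          (2 * stdNormalCDF (Real.sqrt (2 * φ) * tstar) - 1) * (6 * φ) ∧
    ((-1:ℝ) ^ 1 * tstar * ∫ x in (-tstar)..tstar,
        iteratedFDeriv ℝ (1 + 2) K (x • u) (fun _ => uperp)) = 0 ∧
    ((-1:ℝ) ^ 2 * tstar * ∫ x in (-tstar)..tstar,
        iteratedFDeriv ℝ (2 + 1) K (x • u) (fun _ => uperp)) = 0 := by
  have hKfun : K = fun Δ => s2 * Real.exp (-(φ * ‖Δ‖ ^ 2)) := funext hK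
  have hKs : ContDiff ℝ ⊤ K := by
    rw [hKfun]
    exact contDiff_const.mul ((contDiff_const.mul (contDiff_norm_sq ℝ)).neg).exp
  have hnorm : ∀ x t : ℝ, ‖x • u + t • uperp‖ ^ 2 = x ^ 2 + t ^ 2 := by
    intro x t
    have hin : ⟪x • u, t • uperp⟫ = 0 := by
      rw [real_inner_smul_left, real_inner_smul_right, horth]; ring
    rw [norm_add_sq_real, hin, norm_smul, norm_smul, hu, huperp]
    simp [sq_abs]
  have hpt : ∀ (n : ℕ) (x : ℝ), (iteratedFDeriv ℝ n K (x • u) fun _ => uperp)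
      = (s2 * Real.exp (-(φ * x ^ 2))) * iteratedDeriv n (g0 φ) 0 := by
    intro n x
    rw [iteratedFDeriv_dir K hKs (x • u) uperp n]
    have hfun : (fun t : ℝ => K (x • u + t • uperp))
        = fun t => (s2 * Real.exp (-(φ * x ^ 2))) * g0 φ t := by
      funext t
      rw [hK, hnorm x t, show -(φ * (x ^ 2 + t ^ 2)) = -(φ * x ^ 2) + -(φ * t ^ 2) by ring,
        Real.exp_add]
      unfold g0
      ring
    rw [hfun]
    have hsm : ∀ t : ℝ, (s2 * Real.exp (-(φ * x ^ 2))) * g0 φ t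
        = (s2 * Real.exp (-(φ * x ^ 2))) • g0 φ t := fun t => rfl
    simp_rw [hsm]
    rw [show (fun t => (s2 * Real.exp (-(φ * x ^ 2))) • g0 φ t)
        = (s2 * Real.exp (-(φ * x ^ 2))) • (g0 φ) from rfl]
    rw [iteratedDeriv_eq_iteratedFDeriv, iteratedDeriv_eq_iteratedFDeriv,
      iteratedFDeriv_const_smul_apply ((contDiff_g0 φ).of_le le_top).contDiffAt]
    simp
  have hI2 : (∫ x in (-tstar)..tstar, iteratedFDeriv ℝ (1 + 1) K (x • u) fun _ => uperp)
      = (s2 * ∫ x in (-tstar)..tstar, Real.exp (-(φ * x ^ 2))) * (-(2 * φ)) := by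
    have h : ∀ x : ℝ, (iteratedFDeriv ℝ (1 + 1) K (x • u) fun _ => uperp)
        = (s2 * Real.exp (-(φ * x ^ 2))) * (-(2 * φ)) := by
      intro x
      rw [hpt (1 + 1) x, show (1 + 1 : ℕ) = 2 from rfl, iteratedDeriv_g0_two]
    simp_rw [h]
    rw [intervalIntegral.integral_mul_const, intervalIntegral.integral_const_mul]
  have hI4 : (∫ x in (-tstar)..tstar, iteratedFDeriv ℝ (2 + 2) K (x • u) fun _ => uperp)
      = (s2 * ∫ x in (-tstar)..tstar, Real.exp (-(φ * x ^ 2))) * (12 * φ ^ 2) := by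
    have h : ∀ x : ℝ, (iteratedFDeriv ℝ (2 + 2) K (x • u) fun _ => uperp)
        = (s2 * Real.exp (-(φ * x ^ 2))) * (12 * φ ^ 2) := by
      intro x
      rw [hpt (2 + 2) x, show (2 + 2 : ℕ) = 4 from rfl, iteratedDeriv_g0_four]
    simp_rw [h]
    rw [intervalIntegral.integral_mul_const, intervalIntegral.integral_const_mul]
  have hI3 : ∀ m : ℕ, m = 3 →
      (∫ x in (-tstar)..tstar, iteratedFDeriv ℝ m K (x • u) fun _ => uperp) = 0 := by
    intro m hm
    have h : ∀ x : ℝ, (iteratedFDeriv ℝ m K (x • u) fun _ => uperp) = 0 := by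
      intro x
      rw [hpt m x, hm, iteratedDeriv_g0_three, mul_zero]
    simp_rw [h]
    exact intervalIntegral.integral_zero
  have hΦ := cdf_gauss φ tstar hφ
  have hsq : Real.sqrt Real.pi * Real.sqrt φ * Real.sqrt (φ / Real.pi) = φ := by
    rw [Real.sqrt_div hφ.le]
    rw [show Real.sqrt Real.pi * Real.sqrt φ * (Real.sqrt φ / Real.sqrt Real.pi)
      = (Real.sqrt φ * Real.sqrt φ) * (Real.sqrt Real.pi / Real.sqrt Real.pi) by ring,
      Real.mul_self_sqrt hφ.le, div_self (by positivity : Real.sqrt Real.pi ≠ 0), mul_one]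
  set I := ∫ x in (-tstar)..tstar, Real.exp (-(φ * x ^ 2)) with hIdef
  refine ⟨?_, ?_, ?_, ?_⟩
  · rw [hI2, hΦ]
    linear_combination (-2) * s2 * tstar * I * hsq
  · rw [hI4, hΦ]
    linear_combination (-12) * s2 * φ * tstar * I * hsq
  · rw [hI3 (1 + 2) rfl]; ring
  · rw [hI3 (2 + 1) rfl]; ring
end

section
/- For the non-separable Gneiting–Matérn kernel with ν = 3/2 in d = 2, K̃(‖Δ‖,|δ|) = (σ²/A_t)(1 + √3 φ_s‖Δ‖/A_t^{1/2}) exp(−√3 φ_s‖Δ‖/A_t^{1/2}) where A_t = φ_t²δ² + 1, the limiting cross-covariance matrix of (Z, ∂_sZ, ∂_tZ, ∂_t∂_sZ) at coincident points is block diagonal: Var(∂_sZ) = 3σ²φ_s² I_d, Var(∂_tZ) = 2σ²φ_t², Var(∂_t∂_sZ) = 12σ²φ_s²φ_t² I_d, and all cross-covariances between distinct derivative components vanish as (‖Δ‖,|δ|) → (0,0). -/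
open scoped RealInnerProductSpace

set_option linter.unusedSectionVars false
set_option linter.unusedVariables false
open Real

-- 1D derivative lemmas
lemma oneD (C b : ℝ) (hb : 0 ≤ b) (k : ℕ) :
    deriv (fun δ : ℝ => C / (b * δ ^ 2 + 1) ^ (k+1)) 0 = 0 ∧
    iteratedDeriv 2 (fun δ : ℝ => C / (b * δ ^ 2 + 1) ^ (k+1)) 0 = -(2*(k+1)) * C * b := by
  have hu : ∀ δ : ℝ, (0:ℝ) < b * δ ^ 2 + 1 := fun δ => by positivity
  have hud : ∀ δ : ℝ, HasDerivAt (fun δ : ℝ => b * δ ^ 2 + 1) (b * (2 * δ)) δ := by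
    intro δ
    have := ((hasDerivAt_pow 2 δ).const_mul b).add_const 1
    exact this.congr_deriv (by ring)
  have hG : ∀ δ : ℝ, HasDerivAt (fun δ : ℝ => C / (b * δ ^ 2 + 1) ^ (k+1))
      (-(2*(k+1)) * C * b * δ / (b * δ ^ 2 + 1) ^ (k+2)) δ := by
    intro δ
    have h := (hasDerivAt_const δ C).div ((hud δ).pow (k+1)) (pow_ne_zero _ (hu δ).ne')
    refine h.congr_deriv ?_
    have h1 : (b * δ ^ 2 + 1) ≠ 0 := (hu δ).ne'
    simp only [Pi.pow_apply, Nat.add_sub_cancel]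
    push_cast
    field_simp
    ring
  have hderiv : deriv (fun δ : ℝ => C / (b * δ ^ 2 + 1) ^ (k+1))
      = fun δ => -(2*(k+1)) * C * b * δ / (b * δ ^ 2 + 1) ^ (k+2) :=
    funext fun δ => (hG δ).deriv
  refine ⟨?_, ?_⟩
  · rw [hderiv]; simp
  · rw [show (2:ℕ) = 1 + 1 from rfl, iteratedDeriv_succ, iteratedDeriv_one, hderiv]
    have hN : HasDerivAt (fun δ : ℝ => -(2*((k:ℝ)+1)) * C * b * δ) (-(2*((k:ℝ)+1)) * C * b) 0 := by
      simpa using (hasDerivAt_id (0:ℝ)).const_mul (-(2*((k:ℝ)+1)) * C * b)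
    have hD : HasDerivAt (fun δ : ℝ => (b * δ ^ 2 + 1) ^ (k+2))
        ((k+2 : ℕ) * (b * 0 ^ 2 + 1) ^ (k+2-1) * (b * (2 * 0))) 0 := (hud 0).pow (k+2)
    have h := hN.div hD (by positivity)
    have := h.deriv
    erw [this]
    push_cast
    field_simp
    simp
open Real Asymptotics

lemma matern_lower (x : ℝ) (hx : 0 ≤ x) : 1 - x^2/2 ≤ (1+x) * Real.exp (-x) := by
  have hG : ∀ t : ℝ, HasDerivAt (fun t : ℝ => t^2/2 - 1 + (1+t) * Real.exp (-t))
      (t - t * Real.exp (-t)) t := by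
    intro t
    have h1 : HasDerivAt (fun t : ℝ => Real.exp (-t)) (-Real.exp (-t)) t := by
      exact ((Real.hasDerivAt_exp (-t)).comp t (hasDerivAt_neg t)).congr_deriv (by ring)
    have h2 : HasDerivAt (fun t : ℝ => (1+t) * Real.exp (-t))
        (1 * Real.exp (-t) + (1+t) * -Real.exp (-t)) t :=
      (((hasDerivAt_id t).const_add 1)).mul h1
    have h3 : HasDerivAt (fun t : ℝ => t^2/2 - 1) ((2:ℕ) * t^(2-1) / 2) t :=
      ((hasDerivAt_pow 2 t).div_const 2).sub_const 1
    have := h3.add h2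
    exact this.congr_deriv (by ring)
  have key : MonotoneOn (fun t : ℝ => t^2/2 - 1 + (1+t) * Real.exp (-t)) (Set.Ici 0) := by
    apply monotoneOn_of_deriv_nonneg (convex_Ici 0)
    · fun_prop
    · intro t ht
      exact (hG t).differentiableAt.differentiableWithinAt
    · intro t ht
      rw [(hG t).deriv]
      rw [interior_Ici] at ht
      have h1 : Real.exp (-t) ≤ 1 := Real.exp_le_one_iff.2 (by simp [le_of_lt (Set.mem_Ioi.1 ht)])
      nlinarith [le_of_lt (Set.mem_Ioi.1 ht)]
  have h0 := key (Set.self_mem_Ici) (Set.mem_Ici.2 hx) hx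
  simp only [neg_zero, Real.exp_zero] at h0
  norm_num at h0
  nlinarith [h0]

lemma matern_abs_bound (x : ℝ) (hx : 0 ≤ x) : |(1+x) * Real.exp (-x) - 1| ≤ x^2/2 := by
  rw [abs_le]
  constructor
  · have := matern_lower x hx; linarith
  · have h1 : 1 + x ≤ Real.exp x := by have := Real.add_one_le_exp x; linarith
    have h2 : (0:ℝ) < Real.exp (-x) := Real.exp_pos _
    have h3 : (1+x) * Real.exp (-x) ≤ Real.exp x * Real.exp (-x) :=
      mul_le_mul_of_nonneg_right h1 h2.le
    rw [← Real.exp_add] at h3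
    simp only [add_neg_cancel, Real.exp_zero] at h3
    nlinarith [sq_nonneg x]

lemma exp_abs_bound (x : ℝ) (hx : 0 ≤ x) : |Real.exp (-x) - 1| ≤ x := by
  rw [abs_le]
  constructor
  · have := Real.add_one_le_exp (-x); linarith
  · have : Real.exp (-x) ≤ 1 := Real.exp_le_one_iff.2 (by linarith)
    linarith
open Real Asymptotics

variable {E : Type*} [NormedAddCommGroup E] [InnerProductSpace ℝ E]

noncomputable def innerL (E : Type*) [NormedAddCommGroup E] [InnerProductSpace ℝ E] :
    E →L[ℝ] E →L[ℝ] ℝ :=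
  LinearMap.mkContinuous₂
    (LinearMap.mk₂ ℝ (fun x y => ⟪x, y⟫)
      (fun x x' y => inner_add_left x x' y)
      (fun r x y => real_inner_smul_left x y r)
      (fun x y y' => inner_add_right x y y')
      (fun r x y => real_inner_smul_right x y r))
    1 (fun x y => by simpa using abs_real_inner_le_norm x y)

@[simp] lemma innerL_apply (x y : E) : innerL E x y = ⟪x, y⟫ := rfl

lemma innerL_norm_le (x : E) : ‖innerL E x‖ ≤ ‖x‖ :=
  ContinuousLinearMap.opNorm_le_bound _ (norm_nonneg x)
    (fun y => by simpa using abs_real_inner_le_norm x y)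

lemma sqnorm_littleO : (fun h : E => ‖h‖ * ‖h‖) =o[nhds 0] (fun h => h) := by
  rw [← isLittleO_norm_right]
  have h1 : (fun h : E => ‖h‖) =o[nhds 0] (fun _ => (1:ℝ)) :=
    (isLittleO_one_iff ℝ).2 tendsto_norm_zero
  have h2 := h1.mul_isBigO (isBigO_refl (fun h : E => ‖h‖) (nhds 0))
  simpa using h2

set_option linter.unusedSectionVars false

lemma psi_hasDerivAt (a c t0 : ℝ) (ht : 0 < t0) :
    HasDerivAt (fun t : ℝ => a * (1 + c * Real.sqrt t) * Real.exp (-(c * Real.sqrt t)))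
      (-(a * c^2 / 2) * Real.exp (-(c * Real.sqrt t0))) t0 := by
  have hs : HasDerivAt Real.sqrt (1 / (2 * Real.sqrt t0)) t0 := Real.hasDerivAt_sqrt ht.ne'
  have h1 : HasDerivAt (fun t : ℝ => c * Real.sqrt t) (c * (1 / (2 * Real.sqrt t0))) t0 :=
    hs.const_mul c
  have hexp : HasDerivAt (fun t : ℝ => Real.exp (-(c * Real.sqrt t)))
      (Real.exp (-(c * Real.sqrt t0)) * -(c * (1 / (2 * Real.sqrt t0)))) t0 := h1.neg.exp
  have hmul : HasDerivAt (fun t : ℝ => a * (1 + c * Real.sqrt t))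
      (a * (c * (1 / (2 * Real.sqrt t0)))) t0 := (h1.const_add 1).const_mul a
  have h := hmul.mul hexp
  refine h.congr_deriv ?_
  have hst : Real.sqrt t0 ≠ 0 := by positivity
  have hsq : Real.sqrt t0 * Real.sqrt t0 = t0 := Real.mul_self_sqrt ht.le
  field_simp
  ring

lemma matern_hasFDerivAt (a c : ℝ) (hc : 0 ≤ c) (Δ : E) :
    HasFDerivAt (fun x : E => a * (1 + c * ‖x‖) * Real.exp (-(c * ‖x‖)))
      ((-(a * c^2) * Real.exp (-(c * ‖Δ‖))) • (innerL E Δ)) Δ := by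
  rcases eq_or_ne Δ 0 with rfl | hΔ
  · have hz : ((-(a * c^2) * Real.exp (-(c * ‖(0:E)‖))) • (innerL E (0:E))) = 0 := by
      ext y; simp
    rw [hz, hasFDerivAt_iff_isLittleO_nhds_zero]
    have hb : (fun h : E => a * (1 + c * ‖h‖) * Real.exp (-(c * ‖h‖)) - a)
        =O[nhds 0] (fun h : E => ‖h‖ * ‖h‖) := by
      apply IsBigO.of_bound (|a| * c^2 / 2)
      filter_upwards with h
      have hx : 0 ≤ c * ‖h‖ := by positivity
      have hbd := matern_abs_bound (c * ‖h‖) hx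
      have he : |a * (1 + c * ‖h‖) * Real.exp (-(c * ‖h‖)) - a|
          = |a| * |(1 + c * ‖h‖) * Real.exp (-(c * ‖h‖)) - 1| := by
        rw [← abs_mul]; ring_nf
      rw [Real.norm_eq_abs, Real.norm_eq_abs, he, abs_of_nonneg (by positivity : (0:ℝ) ≤ ‖h‖ * ‖h‖)]
      calc |a| * |(1 + c * ‖h‖) * Real.exp (-(c * ‖h‖)) - 1|
          ≤ |a| * ((c * ‖h‖)^2 / 2) := mul_le_mul_of_nonneg_left hbd (abs_nonneg a)
        _ = |a| * c^2 / 2 * (‖h‖ * ‖h‖) := by ring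
    have := hb.trans_isLittleO sqnorm_littleO
    apply this.congr' _ (Eq.eventuallyEq rfl)
    filter_upwards with h
    simp
  · have ht0 : (0:ℝ) < ‖Δ‖^2 := by have := norm_pos_iff.2 hΔ; positivity
    have hq : HasFDerivAt (fun x : E => ‖x‖^2) (2 • (innerSL ℝ Δ)) Δ :=
      (hasStrictFDerivAt_norm_sq Δ).hasFDerivAt
    have hcomp := (psi_hasDerivAt a c (‖Δ‖^2) ht0).comp_hasFDerivAt Δ hq
    have hfun : ((fun t : ℝ => a * (1 + c * Real.sqrt t) * Real.exp (-(c * Real.sqrt t)))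
        ∘ (fun x : E => ‖x‖^2)) = fun x : E => a * (1 + c * ‖x‖) * Real.exp (-(c * ‖x‖)) := by
      funext x
      simp [Function.comp, Real.sqrt_sq (norm_nonneg x)]
    rw [hfun] at hcomp
    refine hcomp.congr_fderiv ?_
    ext y
    simp [Real.sqrt_sq (norm_nonneg Δ), two_smul]
    ring

lemma matern_fderiv0 (a c : ℝ) (hc : 0 ≤ c) :
    fderiv ℝ (fun x : E => a * (1 + c * ‖x‖) * Real.exp (-(c * ‖x‖))) 0 = 0 := by
  rw [(matern_hasFDerivAt a c hc 0).fderiv]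
  ext y; simp

lemma matern_iter2 (a c : ℝ) (hc : 0 ≤ c) (v w : E) :
    iteratedFDeriv ℝ 2 (fun x : E => a * (1 + c * ‖x‖) * Real.exp (-(c * ‖x‖))) 0 ![v, w]
      = -(a * c^2) * ⟪v, w⟫ := by
  rw [iteratedFDeriv_two_apply]
  have hm : fderiv ℝ (fun x : E => a * (1 + c * ‖x‖) * Real.exp (-(c * ‖x‖)))
      = fun Δ : E => (-(a * c^2) * Real.exp (-(c * ‖Δ‖))) • innerL E Δ :=
    funext fun Δ => (matern_hasFDerivAt a c hc Δ).fderiv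
  rw [hm]
  have key : (fun h : E => ((-(a * c^2)) * (Real.exp (-(c * ‖h‖)) - 1)) • innerL E h)
      =O[nhds 0] fun h : E => ‖h‖ * ‖h‖ := by
    apply IsBigO.of_bound (|(-(a * c^2))| * c)
    filter_upwards with h
    rw [norm_smul (-(a * c^2) * (Real.exp (-(c * ‖h‖)) - 1)) ((innerL E) h)]
    have h1 : ‖innerL E h‖ ≤ ‖h‖ := innerL_norm_le h
    have h2 : |Real.exp (-(c * ‖h‖)) - 1| ≤ c * ‖h‖ := exp_abs_bound _ (by positivity)
    have h3 : ‖(-(a * c^2)) * (Real.exp (-(c * ‖h‖)) - 1)‖ ≤ |(-(a * c^2))| * (c * ‖h‖) := by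
      rw [Real.norm_eq_abs, abs_mul]
      exact mul_le_mul_of_nonneg_left h2 (abs_nonneg _)
    calc ‖(-(a * c^2)) * (Real.exp (-(c * ‖h‖)) - 1)‖ * ‖innerL E h‖
        ≤ (|(-(a * c^2))| * (c * ‖h‖)) * ‖h‖ :=
          mul_le_mul h3 h1 (norm_nonneg _) (by positivity)
      _ = |(-(a * c^2))| * c * ‖(‖h‖ * ‖h‖)‖ := by
          rw [Real.norm_eq_abs, abs_of_nonneg (by positivity : (0:ℝ) ≤ ‖h‖ * ‖h‖)]; ring
  have hlo := key.trans_isLittleO sqnorm_littleO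
  have hL : HasFDerivAt (fun Δ : E => (-(a * c^2) * Real.exp (-(c * ‖Δ‖))) • innerL E Δ)
      ((-(a * c^2)) • innerL E) 0 := by
    rw [hasFDerivAt_iff_isLittleO_nhds_zero]
    apply hlo.congr' _ rfl.eventuallyEq
    filter_upwards with h
    simp only [mul_sub, sub_smul, mul_one]
    simp [ContinuousLinearMap.smul_apply]
    module
  rw [hL.fderiv]
  simp


/-- for the non-separable Gneiting–Matérn kernel with ν = 3/2 in d = 2,
`K̃ = (σ²/A_t)(1 + √3φ_s‖Δ‖/A_t^{1/2})exp(−√3φ_s‖Δ‖/A_t^{1/2})`, `A_t = φ_t²δ²+1`,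
the limiting cross-covariance of `(Z, ∂_sZ, ∂_tZ, ∂_t∂_sZ)` at coincident points is block
diagonal: `Var(∂_sZ) = −∂_s²K(0,0) = 3σ²φ_s² I`, `Var(∂_tZ) = −∂_t²K(0,0) = 2σ²φ_t²`,
`Var(∂_t∂_sZ) = ∂_t²∂_s²K(0,0) = 12σ²φ_s²φ_t² I`, and all cross-covariances between
distinct components (odd-order mixed derivatives of `K` at the origin) vanish. -/
theorem gneiting_matern32_derivative_cross_covariance
    (σ φs φt : ℝ) (hσ : 0 < σ) (hφs : 0 < φs) (hφt : 0 < φt)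
    (K : EuclideanSpace ℝ (Fin 2) → ℝ → ℝ)
    (hK : ∀ (Δ : EuclideanSpace ℝ (Fin 2)) (δ : ℝ),
      K Δ δ = σ ^ 2 / (φt ^ 2 * δ ^ 2 + 1) *
        (1 + Real.sqrt 3 * φs * ‖Δ‖ / Real.sqrt (φt ^ 2 * δ ^ 2 + 1)) *
        Real.exp (-(Real.sqrt 3 * φs * ‖Δ‖ / Real.sqrt (φt ^ 2 * δ ^ 2 + 1)))) :
    (∀ v w : EuclideanSpace ℝ (Fin 2),
        -(iteratedFDeriv ℝ 2 (fun Δ => K Δ 0) 0 ![v, w]) = 3 * σ ^ 2 * φs ^ 2 * ⟪v, w⟫) ∧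
    (-(iteratedDeriv 2 (fun δ => K 0 δ) 0) = 2 * σ ^ 2 * φt ^ 2) ∧
    (∀ v w : EuclideanSpace ℝ (Fin 2),
        iteratedDeriv 2 (fun δ => iteratedFDeriv ℝ 2 (fun Δ => K Δ δ) 0 ![v, w]) 0
          = 12 * σ ^ 2 * φs ^ 2 * φt ^ 2 * ⟪v, w⟫) ∧
    (∀ v : EuclideanSpace ℝ (Fin 2), fderiv ℝ (fun Δ => K Δ 0) 0 v = 0) ∧
    (deriv (fun δ => K 0 δ) 0 = 0) ∧
    (∀ v : EuclideanSpace ℝ (Fin 2),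
        deriv (fun δ => fderiv ℝ (fun Δ => K Δ δ) 0 v) 0 = 0) ∧
    (∀ v w : EuclideanSpace ℝ (Fin 2),
        deriv (fun δ => iteratedFDeriv ℝ 2 (fun Δ => K Δ δ) 0 ![v, w]) 0 = 0) ∧
    (∀ v : EuclideanSpace ℝ (Fin 2),
        iteratedDeriv 2 (fun δ => fderiv ℝ (fun Δ => K Δ δ) 0 v) 0 = 0) := by
  have hA : ∀ δ : ℝ, (0:ℝ) < φt^2*δ^2+1 := fun δ => by positivity
  have hcnn : ∀ δ : ℝ, 0 ≤ Real.sqrt 3 * φs / Real.sqrt (φt^2*δ^2+1) := fun δ => by positivity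
  have hfun : ∀ δ : ℝ, (fun Δ : EuclideanSpace ℝ (Fin 2) => K Δ δ)
      = fun Δ => (σ^2/(φt^2*δ^2+1)) * (1 + (Real.sqrt 3 * φs / Real.sqrt (φt^2*δ^2+1)) * ‖Δ‖)
          * Real.exp (-((Real.sqrt 3 * φs / Real.sqrt (φt^2*δ^2+1)) * ‖Δ‖)) := by
    intro δ; funext Δ; rw [hK]
    have : Real.sqrt 3 * φs * ‖Δ‖ / Real.sqrt (φt^2*δ^2+1)
        = (Real.sqrt 3 * φs / Real.sqrt (φt^2*δ^2+1)) * ‖Δ‖ := by ring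
    rw [this]
  have hc2 : ∀ δ : ℝ, (Real.sqrt 3 * φs / Real.sqrt (φt^2*δ^2+1))^2 = 3*φs^2/(φt^2*δ^2+1) := by
    intro δ
    rw [div_pow, mul_pow, Real.sq_sqrt (by norm_num : (0:ℝ) ≤ 3), Real.sq_sqrt (hA δ).le]
  have hIter : ∀ (δ : ℝ) (v w : EuclideanSpace ℝ (Fin 2)),
      iteratedFDeriv ℝ 2 (fun Δ => K Δ δ) 0 ![v, w]
        = (-(3*σ^2*φs^2*⟪v,w⟫)) / (φt^2*δ^2+1)^(1+1) := by
    intro δ v w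
    rw [hfun δ, matern_iter2 _ _ (hcnn δ) v w, hc2 δ]
    have h1 : (φt^2*δ^2+1) ≠ 0 := (hA δ).ne'
    field_simp
    ring
  have hFder : ∀ δ : ℝ, fderiv ℝ (fun Δ => K Δ δ) 0 = 0 := by
    intro δ; rw [hfun δ]; exact matern_fderiv0 _ _ (hcnn δ)
  have hK0 : (fun δ => K 0 δ) = fun δ : ℝ => σ^2 / (φt^2*δ^2+1)^(0+1) := by
    funext δ; rw [hK]; simp
  have hFv : ∀ v : EuclideanSpace ℝ (Fin 2),
      (fun δ => fderiv ℝ (fun Δ => K Δ δ) 0 v) = fun _ : ℝ => (0:ℝ) := by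
    intro v; funext δ; rw [hFder δ]; simp
  refine ⟨?_, ?_, ?_, ?_, ?_, ?_, ?_, ?_⟩
  · intro v w
    rw [hIter 0 v w]
    norm_num
  · rw [hK0, (oneD (σ^2) (φt^2) (by positivity) 0).2]
    push_cast; ring
  · intro v w
    rw [funext fun δ => hIter δ v w, (oneD _ (φt^2) (by positivity) 1).2]
    push_cast; ring
  · intro v; rw [hFder 0]; simp
  · rw [hK0]; exact (oneD (σ^2) (φt^2) (by positivity) 0).1
  · intro v
    rw [hFv v, deriv_const]
  · intro v w
    rw [funext fun δ => hIter δ v w]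
    exact (oneD _ (φt^2) (by positivity) 1).1
  · intro v
    rw [hFv v]
    simp [iteratedDeriv_succ, iteratedDeriv_zero]
end
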